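/- Let G be a graph with a simple Laplacian eigenvalue μ (multiplicity 1), and let u be a vertex of G such that some μ-eigenvector of L(G) is nonzero at u. Let H be any graph disjoint from G, and let G' be the graph formed from the disjoint union of G and H by joining u to an arbitrary vertex of H. Then the multiplicity of μ as a Laplacian eigenvalue of G' equals its multiplicity as a Laplacian eigenvalue of H. -/

import Mathlib

open Matrix SimpleGraph Finset

lemma lap_mulVec_eq {V : Type*} [Fintype V] [DecidableEq V] (G : SimpleGraph V)
    [DecidableRel G.Adj] (vec : V → ℝ) (v : V) :
    (G.lapMatrix ℝ *ᵥ vec) v = ∑ j, if G.Adj v j then vec v - vec j else 0 := by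
  rw [lapMatrix_mulVec_apply, neighborFinset_eq_filter, ← sum_filter, Finset.sum_sub_distrib,
    Finset.sum_const, ← neighborFinset_eq_filter]
  rw [SimpleGraph.degree, nsmul_eq_mul]

section
variable {n m : ℕ} (G : SimpleGraph (Fin n)) (H : SimpleGraph (Fin m))
    [DecidableRel G.Adj] [DecidableRel H.Adj] (u : Fin n) (w : Fin m)
    (G' : SimpleGraph (Fin n ⊕ Fin m)) [DecidableRel G'.Adj]
    (hG' : ∀ p q : Fin n ⊕ Fin m, G'.Adj p q ↔
      (∃ a b, p = Sum.inl a ∧ q = Sum.inl b ∧ G.Adj a b) ∨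
      (∃ a b, p = Sum.inr a ∧ q = Sum.inr b ∧ H.Adj a b) ∨
      (p = Sum.inl u ∧ q = Sum.inr w) ∨ (p = Sum.inr w ∧ q = Sum.inl u))

include hG' in
lemma lapG'_inl (v : Fin n ⊕ Fin m → ℝ) (a : Fin n) :
    (G'.lapMatrix ℝ *ᵥ v) (Sum.inl a) =
      (G.lapMatrix ℝ *ᵥ (v ∘ Sum.inl)) a +
        (if a = u then v (Sum.inl u) - v (Sum.inr w) else 0) := by
  have hadj1 : ∀ b, G'.Adj (Sum.inl a) (Sum.inl b) ↔ G.Adj a b := by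
    intro b; rw [hG']; simp
  have hadj2 : ∀ b, G'.Adj (Sum.inl a) (Sum.inr b) ↔ (a = u ∧ b = w) := by
    intro b; rw [hG']; simp
  rw [lap_mulVec_eq, Fintype.sum_sum_type, lap_mulVec_eq]
  simp only [hadj1, hadj2, Function.comp_apply]
  congr 1
  by_cases h : a = u
  · subst h; simp
  · simp [h]

include hG' in
lemma lapG'_inr (v : Fin n ⊕ Fin m → ℝ) (b : Fin m) :
    (G'.lapMatrix ℝ *ᵥ v) (Sum.inr b) =
      (H.lapMatrix ℝ *ᵥ (v ∘ Sum.inr)) b +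
        (if b = w then v (Sum.inr w) - v (Sum.inl u) else 0) := by
  have hadj1 : ∀ a, G'.Adj (Sum.inr b) (Sum.inr a) ↔ H.Adj b a := by
    intro a; rw [hG']; simp
  have hadj2 : ∀ a, G'.Adj (Sum.inr b) (Sum.inl a) ↔ (b = w ∧ a = u) := by
    intro a; rw [hG']; aesop
  rw [lap_mulVec_eq, Fintype.sum_sum_type, lap_mulVec_eq]
  simp only [hadj1, hadj2, Function.comp_apply]
  rw [add_comm]
  congr 1
  by_cases h : b = w
  · subst h; simp
  · simp [h]

end

noncomputable def mult {m : Type*} [Fintype m] [DecidableEq m]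
    (M : Matrix m m ℝ) (μ : ℝ) : ℕ :=
  Module.finrank ℝ (Module.End.eigenspace (Matrix.toLin' M) μ)

theorem stmt4 {n m : ℕ} (G : SimpleGraph (Fin n)) (H : SimpleGraph (Fin m))
    [DecidableRel G.Adj] [DecidableRel H.Adj]
    (μ : ℝ) (hsimple : mult (G.lapMatrix ℝ) μ = 1)
    (u : Fin n) (x : Fin n → ℝ) (hx : x ≠ 0)
    (hxe : (G.lapMatrix ℝ).mulVec x = μ • x) (hxu : x u ≠ 0)
    (w : Fin m)
    (G' : SimpleGraph (Fin n ⊕ Fin m)) [DecidableRel G'.Adj]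
    (hG' : ∀ p q : Fin n ⊕ Fin m, G'.Adj p q ↔
      (∃ a b, p = Sum.inl a ∧ q = Sum.inl b ∧ G.Adj a b) ∨
      (∃ a b, p = Sum.inr a ∧ q = Sum.inr b ∧ H.Adj a b) ∨
      (p = Sum.inl u ∧ q = Sum.inr w) ∨ (p = Sum.inr w ∧ q = Sum.inl u)) :
    mult (G'.lapMatrix ℝ) μ = mult (H.lapMatrix ℝ) μ := by
  classical
  -- eigenspace of G is the span of x
  have hxmem : x ∈ Module.End.eigenspace (Matrix.toLin' (G.lapMatrix ℝ)) μ :=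
    Module.End.mem_eigenspace_iff.mpr (by rw [Matrix.toLin'_apply, hxe])
  have hEG : Module.End.eigenspace (Matrix.toLin' (G.lapMatrix ℝ)) μ
      = Submodule.span ℝ {x} := by
    refine (Submodule.eq_of_le_of_finrank_eq
      (Submodule.span_le.mpr (by simpa using hxmem)) ?_).symm
    rw [finrank_span_singleton hx]
    exact hsimple.symm
  -- key characterization of eigenvectors of G'
  have key : ∀ v : Fin n ⊕ Fin m → ℝ,
      (G'.lapMatrix ℝ) *ᵥ v = μ • v →
      (v ∘ Sum.inl = (v (Sum.inr w) / x u) • x) ∧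
      (H.lapMatrix ℝ) *ᵥ (v ∘ Sum.inr) = μ • (v ∘ Sum.inr) := by
    intro v hv
    set y := v ∘ Sum.inl with hy
    set z := v ∘ Sum.inr with hz
    have h1 : (G.lapMatrix ℝ) *ᵥ y = μ • y + (z w - y u) • (Pi.single u 1 : Fin n → ℝ) := by
      funext a
      have h := congrFun hv (Sum.inl a)
      rw [lapG'_inl G H u w G' hG' v a] at h
      simp only [hy, hz, Function.comp_apply, Pi.add_apply, Pi.smul_apply, Pi.single_apply,
        smul_eq_mul] at h ⊢
      by_cases hau : a = u
      · subst hau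
        simp only [if_pos rfl, if_true] at h ⊢
        linarith
      · simp only [if_neg hau, add_zero, mul_zero] at h ⊢
        linarith
    have h2 : (H.lapMatrix ℝ) *ᵥ z = μ • z + (y u - z w) • (Pi.single w 1 : Fin m → ℝ) := by
      funext b
      have h := congrFun hv (Sum.inr b)
      rw [lapG'_inr G H u w G' hG' v b] at h
      simp only [hy, hz, Function.comp_apply, Pi.add_apply, Pi.smul_apply, Pi.single_apply,
        smul_eq_mul] at h ⊢
      by_cases hbw : b = w
      · subst hbw
        simp only [if_pos rfl, if_true] at h ⊢
        linarith
      · simp only [if_neg hbw, add_zero, mul_zero] at h ⊢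
        linarith
    -- inner product with x kills the extra term
    have hdot : x ⬝ᵥ ((G.lapMatrix ℝ) *ᵥ y) = μ * (x ⬝ᵥ y) := by
      rw [dotProduct_mulVec, ← mulVec_transpose,
        show ((G.lapMatrix ℝ))ᵀ = G.lapMatrix ℝ from isSymm_lapMatrix ℝ G, hxe,
        smul_dotProduct, smul_eq_mul]
    have hdot2 : x ⬝ᵥ ((G.lapMatrix ℝ) *ᵥ y)
        = μ * (x ⬝ᵥ y) + (z w - y u) * x u := by
      rw [h1, dotProduct_add, dotProduct_smul, dotProduct_smul, dotProduct_single,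
        smul_eq_mul, smul_eq_mul, mul_one]
    have hc : y u = z w := by
      have h0 : (z w - y u) * x u = 0 := by linarith [hdot, hdot2]
      rcases mul_eq_zero.mp h0 with h | h
      · linarith
      · exact absurd h hxu
    have h1' : (G.lapMatrix ℝ) *ᵥ y = μ • y := by
      rw [h1, hc]; simp
    have hyeig : y ∈ Module.End.eigenspace (Matrix.toLin' (G.lapMatrix ℝ)) μ :=
      Module.End.mem_eigenspace_iff.mpr (by rw [Matrix.toLin'_apply, h1'])
    rw [hEG, Submodule.mem_span_singleton] at hyeig
    obtain ⟨c, hcx⟩ := hyeig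
    have hcu : c * x u = z w := by
      have h := congrFun hcx u
      simp only [Pi.smul_apply, smul_eq_mul] at h
      exact h.trans hc
    constructor
    · rw [← hcx]
      have : v (Sum.inr w) = z w := rfl
      rw [this, ← hcu, mul_div_assoc, div_self hxu, mul_one]
    · rw [h2, hc]; simp
  
  -- build a linear bijection between the eigenspaces
  set E' := Module.End.eigenspace (Matrix.toLin' (G'.lapMatrix ℝ)) μ with hE'
  set EH := Module.End.eigenspace (Matrix.toLin' (H.lapMatrix ℝ)) μ with hEH
  have hmem : ∀ v : E', (LinearMap.funLeft ℝ ℝ (Sum.inr : Fin m → Fin n ⊕ Fin m)).comp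
      E'.subtype v ∈ EH := by
    intro v
    have hv : (G'.lapMatrix ℝ) *ᵥ v.1 = μ • v.1 := by
      have := Module.End.mem_eigenspace_iff.mp v.2
      rwa [Matrix.toLin'_apply] at this
    exact Module.End.mem_eigenspace_iff.mpr (by rw [Matrix.toLin'_apply]; exact (key v.1 hv).2)
  let f : E' →ₗ[ℝ] EH := LinearMap.codRestrict EH _ hmem
  have hinj : Function.Injective f := by
    intro v₁ v₂ hfv
    have h12 : v₁.1 ∘ Sum.inr = v₂.1 ∘ Sum.inr := congrArg Subtype.val hfv
    have hv₁ : (G'.lapMatrix ℝ) *ᵥ v₁.1 = μ • v₁.1 := by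
      have := Module.End.mem_eigenspace_iff.mp v₁.2
      rwa [Matrix.toLin'_apply] at this
    have hv₂ : (G'.lapMatrix ℝ) *ᵥ v₂.1 = μ • v₂.1 := by
      have := Module.End.mem_eigenspace_iff.mp v₂.2
      rwa [Matrix.toLin'_apply] at this
    have k₁ := (key v₁.1 hv₁).1
    have k₂ := (key v₂.1 hv₂).1
    apply Subtype.ext
    funext p
    cases p with
    | inl a =>
      have hw : v₁.1 (Sum.inr w) = v₂.1 (Sum.inr w) := congrFun h12 w
      have := congrFun k₁ a
      have h2 := congrFun k₂ a
      simp only [Function.comp_apply] at this h2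
      rw [this, h2, hw]
    | inr b => exact congrFun h12 b
  have hsurj : Function.Surjective f := by
    rintro ⟨z, hz⟩
    have hzH : (H.lapMatrix ℝ) *ᵥ z = μ • z := by
      have := Module.End.mem_eigenspace_iff.mp hz
      rwa [Matrix.toLin'_apply] at this
    set c := z w / x u with hcdef
    have hcu : c * x u = z w := div_mul_cancel₀ _ hxu
    set vv : Fin n ⊕ Fin m → ℝ := Sum.elim (c • x) z with hvv
    have hvinl : vv ∘ Sum.inl = c • x := rfl
    have hvinr : vv ∘ Sum.inr = z := rfl
    have hvE : vv ∈ E' := by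
      apply Module.End.mem_eigenspace_iff.mpr
      rw [Matrix.toLin'_apply]
      funext p
      cases p with
      | inl a =>
        rw [lapG'_inl G H u w G' hG' vv a, hvinl, mulVec_smul, hxe]
        have h0 : vv (Sum.inl u) - vv (Sum.inr w) = 0 := by
          show c • x u - z w = 0
          rw [smul_eq_mul, hcu, sub_self]
        rw [h0]
        simp only [if_pos, ite_self, add_zero]
        show (c • (μ • x)) a = (μ • vv) (Sum.inl a)
        show c * (μ * x a) = μ * (c * x a)
        ring
      | inr b =>
        rw [lapG'_inr G H u w G' hG' vv b, hvinr, hzH]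
        have h0 : vv (Sum.inr w) - vv (Sum.inl u) = 0 := by
          show z w - c • x u = 0
          rw [smul_eq_mul, hcu, sub_self]
        rw [h0]
        simp only [ite_self, add_zero]
        rfl
    exact ⟨⟨vv, hvE⟩, rfl⟩
  exact LinearEquiv.finrank_eq (LinearEquiv.ofBijective f ⟨hinj, hsurj⟩)
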